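/- For every positive integer n, the real polynomial T_n(x) - 1 factors as the product over all divisors d of n of Ω_d(x)^{σ_d}, where Ω_1(x) = x - 1, Ω_d(x) = ∏_{1 ≤ k ≤ d/2, gcd(k,d)=1} 2(x - cos(2kπ/d)) for d ≥ 2, and σ_d = 1 for d ∈ {1,2}, σ_d = 2 for d > 2. -/

import Mathlib

open Polynomial Polynomial.Chebyshev

noncomputable def Omega (d : ℕ) : Polynomial ℝ :=
  if d = 1 then Polynomial.X - 1
  else ∏ k ∈ (Finset.range (d + 1)).filter (fun k => 1 ≤ k ∧ 2 * k ≤ d ∧ Nat.gcd k d = 1),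
    (Polynomial.C 2 * (Polynomial.X - Polynomial.C (Real.cos (2 * k * Real.pi / d))))

private lemma prod_sub_pow {n : ℕ} (hn : 0 < n) (w ζ : ℂ) (h : IsPrimitiveRoot ζ n) :
    ∏ j ∈ Finset.range n, (w - ζ ^ j) = w ^ n - 1 := by
  haveI : NeZero n := ⟨hn.ne'⟩
  have h2 : ∏ j ∈ Finset.range n, (w - ζ ^ j)
      = ∏ μ ∈ Polynomial.nthRootsFinset n (1 : ℂ), (w - μ) := by
    apply Finset.prod_nbij (fun j => ζ ^ j)
    · intro a ha
      exact (Polynomial.mem_nthRootsFinset hn (1 : ℂ)).2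
        (by rw [← pow_mul, mul_comm, pow_mul, h.pow_eq_one, one_pow])
    · intro a ha b hb hab
      exact h.pow_inj (Finset.mem_range.1 ha) (Finset.mem_range.1 hb) hab
    · intro μ hμ
      obtain ⟨i, hi, rfl⟩ := h.eq_pow_of_pow_eq_one ((Polynomial.mem_nthRootsFinset hn (1 : ℂ)).1 hμ)
      exact ⟨i, by simpa using Finset.mem_range.2 hi, rfl⟩
    · intros; rfl
  rw [h2]
  have := congrArg (Polynomial.eval w) (Polynomial.X_pow_sub_one_eq_prod hn h)
  simpa [Polynomial.eval_prod] using this.symm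

private lemma key_prod (n : ℕ) (hn : 0 < n) (θ : ℝ) :
    ∏ j ∈ Finset.range n, (2 * (Real.cos θ - Real.cos (2 * j * Real.pi / n))) =
      2 * (Real.cos (n * θ) - 1) := by
  apply Complex.ofReal_injective
  push_cast
  set ζ : ℂ := Complex.exp (2 * ↑Real.pi * Complex.I / n) with hζdef
  have hζ : IsPrimitiveRoot ζ n := Complex.isPrimitiveRoot_exp n hn.ne'
  set w : ℂ := Complex.exp (↑θ * Complex.I) with hwdef
  have hw : w ≠ 0 := Complex.exp_ne_zero _
  have hwn : w ^ n ≠ 0 := pow_ne_zero _ hw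
  have hcosθ : 2 * Complex.cos ↑θ = w + w⁻¹ := by
    rw [hwdef, ← Complex.exp_neg]
    have : Complex.cos ↑θ
        = (Complex.exp (↑θ * Complex.I) + Complex.exp (-↑θ * Complex.I)) / 2 := rfl
    rw [this]; ring_nf
  have hζj : ∀ j : ℕ, (ζ : ℂ) ^ j ≠ 0 := fun j => pow_ne_zero _ (Complex.exp_ne_zero _)
  have hcosj : ∀ j : ℕ, 2 * Complex.cos (2 * (j : ℂ) * ↑Real.pi / ↑n) = ζ ^ j + (ζ ^ j)⁻¹ := by
    intro j
    have e1 : (2 * (j : ℂ) * ↑Real.pi / ↑n) * Complex.I = (j : ℕ) * (2 * ↑Real.pi * Complex.I / n) := by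
      push_cast; ring
    have : Complex.cos (2 * (j : ℂ) * ↑Real.pi / ↑n)
        = (Complex.exp ((2 * (j : ℂ) * ↑Real.pi / ↑n) * Complex.I)
          + Complex.exp (-(2 * (j : ℂ) * ↑Real.pi / ↑n) * Complex.I)) / 2 := rfl
    rw [this, neg_mul, Complex.exp_neg, e1, Complex.exp_nat_mul, ← hζdef]
    ring
  have hfac : ∀ j ∈ Finset.range n,
      w * (2 * (Complex.cos ↑θ - Complex.cos (2 * (j : ℂ) * ↑Real.pi / ↑n)))
        = (w - ζ ^ j) * (w - (ζ⁻¹) ^ j) := by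
    intro j _
    rw [inv_pow]
    have : 2 * (Complex.cos ↑θ - Complex.cos (2 * (j : ℂ) * ↑Real.pi / ↑n))
        = (w + w⁻¹) - (ζ ^ j + (ζ ^ j)⁻¹) := by
      rw [mul_sub, hcosθ, hcosj]
    rw [this]
    have hz : ζ ^ j * ζ⁻¹ ^ j = 1 := by
      rw [← mul_pow, mul_inv_cancel₀ (Complex.exp_ne_zero _), one_pow]
    field_simp
    linear_combination (-(w * ζ ^ j) - 1) * hz
  apply mul_left_cancel₀ hwn
  calc w ^ n * ∏ j ∈ Finset.range n, (2 * (Complex.cos ↑θ - Complex.cos (2 * (j : ℂ) * ↑Real.pi / ↑n)))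
      = ∏ j ∈ Finset.range n, (w * (2 * (Complex.cos ↑θ - Complex.cos (2 * (j : ℂ) * ↑Real.pi / ↑n)))) := by
        simp only [Finset.prod_mul_distrib, Finset.prod_const, Finset.card_range]
    _ = ∏ j ∈ Finset.range n, ((w - ζ ^ j) * (w - (ζ⁻¹) ^ j)) := Finset.prod_congr rfl hfac
    _ = (w ^ n - 1) * (w ^ n - 1) := by
        rw [Finset.prod_mul_distrib, prod_sub_pow hn w ζ hζ, prod_sub_pow hn w ζ⁻¹ hζ.inv]
    _ = w ^ n * (2 * (Complex.cos ((n : ℂ) * ↑θ) - 1)) := by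
        have h2 : 2 * Complex.cos ((n : ℂ) * ↑θ) = w ^ n + (w ^ n)⁻¹ := by
          have e1 : ((n : ℂ) * ↑θ) * Complex.I = (n : ℕ) * (↑θ * Complex.I) := by push_cast; ring
          have : Complex.cos ((n : ℂ) * ↑θ)
              = (Complex.exp (((n : ℂ) * ↑θ) * Complex.I)
                + Complex.exp (-((n : ℂ) * ↑θ) * Complex.I)) / 2 := rfl
          rw [this, neg_mul, Complex.exp_neg, e1, Complex.exp_nat_mul, ← hwdef]
          ring
        have : 2 * (Complex.cos ((n : ℂ) * ↑θ) - 1) = (w ^ n + (w ^ n)⁻¹) - 2 := by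
          rw [mul_sub, h2]; ring
        rw [this]
        field_simp
        ring

noncomputable def Qp (d : ℕ) (x : ℝ) : ℝ :=
  ∏ k ∈ (Finset.range d).filter (fun k => Nat.gcd k d = 1),
    (2 * (x - Real.cos (2 * k * Real.pi / d)))

lemma Q_one' (x : ℝ) : Qp 1 x = 2 * (Omega 1).eval x := by
  have h1 : (Finset.range 1).filter (fun k => Nat.gcd k 1 = 1) = {0} := by decide
  rw [Qp, h1, Finset.prod_singleton, Omega, if_pos rfl]
  simp

lemma Q_two (x : ℝ) : Qp 2 x = (Omega 2).eval x := by
  have h1 : (Finset.range 2).filter (fun k => Nat.gcd k 2 = 1) = {1} := by decide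
  have h2 : (Finset.range (2 + 1)).filter (fun k => 1 ≤ k ∧ 2 * k ≤ 2 ∧ Nat.gcd k 2 = 1) = {1} := by
    decide
  rw [Qp, h1, Finset.prod_singleton, Omega, if_neg (by norm_num), h2, Finset.prod_singleton]
  simp

lemma gcd_sub_aux {a d : ℕ} (had : a < d) (hg : Nat.gcd a d = 1) :
    Nat.gcd (d - a) d = 1 := by
  calc Nat.gcd (d - a) d = Nat.gcd (d - a) (a + (d - a)) := by
        congr 1; omega
    _ = Nat.gcd (d - a) a := Nat.gcd_add_self_right _ _
    _ = Nat.gcd d a := Nat.gcd_sub_self_left (by omega)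
    _ = 1 := by rw [Nat.gcd_comm]; exact hg

lemma Q_ge3 (d : ℕ) (hd : 3 ≤ d) (x : ℝ) : Qp d x = (Omega d).eval x ^ 2 := by
  have hd0 : (d : ℝ) ≠ 0 := by positivity
  set f : ℕ → ℝ := fun k => 2 * (x - Real.cos (2 * k * Real.pi / d)) with hf
  have hOmega : (Omega d).eval x
      = ∏ k ∈ (Finset.range (d + 1)).filter (fun k => 1 ≤ k ∧ 2 * k ≤ d ∧ Nat.gcd k d = 1), f k := by
    rw [Omega, if_neg (by omega)]
    simp [hf, Polynomial.eval_prod]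
  set A := (Finset.range (d + 1)).filter (fun k => 1 ≤ k ∧ 2 * k ≤ d ∧ Nat.gcd k d = 1) with hA
  set B := (Finset.range d).filter (fun k => Nat.gcd k d = 1) with hB
  have key1 : B.filter (fun k => 2 * k ≤ d) = A := by
    ext k
    simp only [hA, hB, Finset.mem_filter, Finset.mem_range]
    constructor
    · rintro ⟨⟨hk, hg⟩, hk2⟩
      have : k ≠ 0 := by rintro rfl; simp at hg; omega
      exact ⟨by omega, by omega, hk2, hg⟩
    · rintro ⟨hk, h1, h2, hg⟩
      have : k ≠ d := by rintro rfl; simp [Nat.gcd_self] at hg; omega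
      exact ⟨⟨by omega, hg⟩, h2⟩
  have key2 : ∏ k ∈ B.filter (fun k => ¬ 2 * k ≤ d), f k = ∏ k ∈ A, f k := by
    apply Finset.prod_nbij' (fun k => d - k) (fun k => d - k)
    · intro a ha
      simp only [hA, hB, Finset.mem_filter, Finset.mem_range] at ha ⊢
      obtain ⟨⟨had, hg⟩, h2a⟩ := ha
      exact ⟨by omega, by omega, by omega, gcd_sub_aux had hg⟩
    · intro a ha
      simp only [hA, hB, Finset.mem_filter, Finset.mem_range] at ha ⊢
      obtain ⟨had, h1, h2, hg⟩ := ha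
      have hne : 2 * a ≠ d := by
        intro h
        have h1' : Nat.gcd a d = a := by rw [← h, two_mul, Nat.gcd_add_self_right, Nat.gcd_self]
        omega
      have hlt : a < d := by omega
      exact ⟨⟨by omega, gcd_sub_aux hlt hg⟩, by omega⟩
    · intro a ha
      simp only [hB, Finset.mem_filter, Finset.mem_range] at ha
      omega
    · intro a ha
      simp only [hA, Finset.mem_filter, Finset.mem_range] at ha
      omega
    · intro a ha
      simp only [hB, Finset.mem_filter, Finset.mem_range] at ha
      obtain ⟨⟨had, hg⟩, h2a⟩ := ha
      simp only [hf]
      congr 2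
      rw [Nat.cast_sub had.le]
      have : 2 * ((d : ℝ) - a) * Real.pi / d = 2 * Real.pi - 2 * a * Real.pi / d := by
        field_simp
      rw [this, Real.cos_two_pi_sub]
  have hsplit : Qp d x = (∏ k ∈ B.filter (fun k => 2 * k ≤ d), f k)
      * ∏ k ∈ B.filter (fun k => ¬ 2 * k ≤ d), f k := by
    rw [Qp, Finset.prod_filter_mul_prod_filter_not]
  rw [hsplit, key1, key2, hOmega, sq]

lemma prod_fiber (n d : ℕ) (hn : 0 < n) (hd : d ∣ n) (x : ℝ) :
    ∏ j ∈ (Finset.range n).filter (fun j => n / Nat.gcd j n = d),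
      (2 * (x - Real.cos (2 * j * Real.pi / n))) = Qp d x := by
  have hd0 : 0 < d := Nat.pos_of_dvd_of_pos hd hn
  set m := n / d with hm
  have hnm : n = d * m := (Nat.mul_div_cancel' hd).symm
  have hm0 : 0 < m := Nat.div_pos (Nat.le_of_dvd hn hd) hd0
  have hmr : (m : ℝ) ≠ 0 := by positivity
  have hdr : (d : ℝ) ≠ 0 := by positivity
  symm
  rw [Qp]
  apply Finset.prod_nbij' (fun k => k * m) (fun j => j / m)
  · intro a ha
    simp only [Finset.mem_filter, Finset.mem_range] at ha ⊢
    obtain ⟨had, hg⟩ := ha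
    have hgcd : Nat.gcd (a * m) n = m := by
      rw [hnm, Nat.gcd_mul_right, hg, one_mul]
    refine ⟨?_, ?_⟩
    · calc a * m < d * m := (Nat.mul_lt_mul_right hm0).2 had
        _ = n := hnm.symm
    · rw [hgcd, hnm, Nat.mul_div_cancel _ hm0]
  · intro j hj
    simp only [Finset.mem_filter, Finset.mem_range] at hj ⊢
    obtain ⟨hjn, hfib⟩ := hj
    have hg : Nat.gcd j n = m := by
      rw [hm, ← hfib]
      exact (Nat.div_div_self (Nat.gcd_dvd_right j n) hn.ne').symm
    have hmj : m ∣ j := hg ▸ Nat.gcd_dvd_left j n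
    refine ⟨?_, ?_⟩
    · rw [Nat.div_lt_iff_lt_mul hm0]
      calc j < n := hjn
        _ = d * m := hnm
    · have hmul : Nat.gcd (j / m) d * m = m := by
        rw [← Nat.gcd_mul_right, Nat.div_mul_cancel hmj, ← hnm, hg]
      have := Nat.eq_of_mul_eq_mul_right hm0 (hmul.trans (one_mul m).symm)
      exact this
  · intro a _
    exact Nat.mul_div_cancel a hm0
  · intro j hj
    simp only [Finset.mem_filter, Finset.mem_range] at hj
    obtain ⟨hjn, hfib⟩ := hj
    have hg : Nat.gcd j n = m := by
      rw [hm, ← hfib]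
      exact (Nat.div_div_self (Nat.gcd_dvd_right j n) hn.ne').symm
    exact Nat.div_mul_cancel (hg ▸ Nat.gcd_dvd_left j n)
  · intro a ha
    have hcast : ((n : ℝ)) = (d : ℝ) * m := by exact_mod_cast congrArg (Nat.cast : ℕ → ℝ) hnm
    have harg : 2 * ((a : ℕ) : ℝ) * Real.pi / d = 2 * ((a * m : ℕ) : ℝ) * Real.pi / n := by
      push_cast
      rw [hcast]
      field_simp
    rw [harg]

lemma prod_split (n : ℕ) (hn : 0 < n) (x : ℝ) :
    ∏ j ∈ Finset.range n, (2 * (x - Real.cos (2 * j * Real.pi / n)))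
      = ∏ d ∈ n.divisors, Qp d x := by
  have hmap : ∀ j ∈ Finset.range n, n / Nat.gcd j n ∈ n.divisors := fun j _ =>
    Nat.mem_divisors.2 ⟨Nat.div_dvd_of_dvd (Nat.gcd_dvd_right j n), hn.ne'⟩
  rw [← Finset.prod_fiberwise_of_maps_to hmap
      (fun j : ℕ => 2 * (x - Real.cos (2 * j * Real.pi / n)))]
  exact Finset.prod_congr rfl fun d hd => prod_fiber n d hn (Nat.mem_divisors.1 hd).1 x

lemma Q_total (n : ℕ) (hn : 0 < n) (x : ℝ) :
    2 * ∏ d ∈ n.divisors, (Omega d).eval x ^ (if d ≤ 2 then 1 else 2)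
      = ∏ d ∈ n.divisors, Qp d x := by
  have h1 : (1 : ℕ) ∈ n.divisors := Nat.one_mem_divisors.2 hn.ne'
  have h2 : ∀ d ∈ n.divisors.erase 1,
      Qp d x = (Omega d).eval x ^ (if d ≤ 2 then 1 else 2) := by
    intro d hd
    obtain ⟨hne, hdd⟩ := Finset.mem_erase.1 hd
    have hd0 : 0 < d := Nat.pos_of_mem_divisors hdd
    rcases Nat.lt_or_ge d 3 with h | h
    · have : d = 2 := by omega
      subst this
      rw [Q_two, if_pos (by norm_num), pow_one]
    · rw [Q_ge3 d h, if_neg (by omega)]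
  rw [← Finset.mul_prod_erase _ _ h1, ← Finset.mul_prod_erase _ (fun d => Qp d x) h1]
  rw [if_pos (by norm_num), pow_one, ← mul_assoc, ← Q_one']
  exact congrArg _ (Finset.prod_congr rfl fun d hd => (h2 d hd).symm)

theorem chebyshev_sub_one_factorization (n : ℕ) (hn : 0 < n) :
    T ℝ n - 1 = ∏ d ∈ n.divisors, Omega d ^ (if d ≤ 2 then 1 else 2) := by
  apply Polynomial.eq_of_infinite_eval_eq
  refine Set.Infinite.mono ?_ (Set.Icc_infinite (a := (-1 : ℝ)) (b := 1) (by norm_num))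
  intro x hx
  simp only [Set.mem_setOf_eq]
  obtain ⟨hx1, hx2⟩ := hx
  set θ := Real.arccos x with hθ
  have hcos : Real.cos θ = x := Real.cos_arccos hx1 hx2
  have hL : Polynomial.eval x (T ℝ n - 1) = Real.cos (n * θ) - 1 := by
    rw [Polynomial.eval_sub, Polynomial.eval_one, ← hcos,
      Polynomial.Chebyshev.T_real_cos]
    push_cast
    ring_nf
  have hR : Polynomial.eval x (∏ d ∈ n.divisors, Omega d ^ (if d ≤ 2 then 1 else 2))
      = ∏ d ∈ n.divisors, (Omega d).eval x ^ (if d ≤ 2 then 1 else 2) := by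
    rw [Polynomial.eval_prod]
    exact Finset.prod_congr rfl fun d _ => Polynomial.eval_pow _
  rw [hL, hR]
  have hkey := key_prod n hn θ
  rw [hcos] at hkey
  have h2 := (Q_total n hn x).trans (prod_split n hn x).symm
  have h3 := mul_left_cancel₀ (two_ne_zero' ℝ) (h2.trans hkey)
  exact h3.symm
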